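/- Let I ⊆ ℝ be an open interval, b, c, f₄ : ℝ → ℝ with c(x) ≠ 0 on I, suppose q(x) = f₄(x)/c(x) is differentiable on I, and define a(x) = (1/(4c(x)))·[ 2c(x)·q'(x) − f₄(x)² − 2b(x)f₄(x) ]. Let B be differentiable on I with B'(x) = b(x) + f₄(x), and G differentiable on I with G'(x) = c(x)·exp(B(x)). Then for every constant C₁₀ ∈ ℝ, the function y(x) = f₄(x)/(2c(x)) + exp(B(x))/(C₁₀ − G(x)) satisfies y'(x) = a(x) + b(x)y(x) + c(x)y(x)² at every x ∈ I with C₁₀ − G(x) ≠ 0. -/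

import Mathlib

/-- Theorem 7 (Case 7): with `f₄/c` differentiable with derivative `q'`,
`a = (1/(4c))[2c·q' − f₄² − 2bf₄]`, `B' = b + f₄` and `G' = c · exp B`, the
function `y = f₄/(2c) + exp B / (C₁₀ − G)` solves the Riccati equation
wherever `C₁₀ − G ≠ 0`. -/
theorem riccati_case7_general
    (p q : ℝ) (a b c f₄ q' B G : ℝ → ℝ)
    (hc : ∀ x ∈ Set.Ioo p q, c x ≠ 0)
    (hq : ∀ x ∈ Set.Ioo p q, HasDerivAt (fun t => f₄ t / c t) (q' x) x)
    (ha : ∀ x ∈ Set.Ioo p q,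
      a x = (1 / (4 * c x)) * (2 * c x * q' x - f₄ x ^ 2 - 2 * b x * f₄ x))
    (hB : ∀ x ∈ Set.Ioo p q, HasDerivAt B (b x + f₄ x) x)
    (hG : ∀ x ∈ Set.Ioo p q, HasDerivAt G (c x * Real.exp (B x)) x)
    (C₁₀ : ℝ) :
    ∀ x ∈ Set.Ioo p q, C₁₀ - G x ≠ 0 →
      HasDerivAt (fun t => f₄ t / (2 * c t) + Real.exp (B t) / (C₁₀ - G t))
        (a x + b x * (f₄ x / (2 * c x) + Real.exp (B x) / (C₁₀ - G x))
          + c x * (f₄ x / (2 * c x) + Real.exp (B x) / (C₁₀ - G x)) ^ 2) x := by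
  intro x hx hne
  have hcx := hc x hx
  have hq2 : HasDerivAt (fun t => f₄ t / c t / 2) (q' x / 2) x := (hq x hx).div_const 2
  have hE : HasDerivAt (fun t => Real.exp (B t)) (Real.exp (B x) * (b x + f₄ x)) x :=
    (hB x hx).exp
  have hD : HasDerivAt (fun t => C₁₀ - G t) (-(c x * Real.exp (B x))) x :=
    (hG x hx).const_sub C₁₀
  have h4 := hE.div hD hne
  have hfun : (fun t => f₄ t / (2 * c t) + Real.exp (B t) / (C₁₀ - G t))
      = fun t => f₄ t / c t / 2 + Real.exp (B t) / (C₁₀ - G t) := by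
    funext t
    rw [div_div, mul_comm]
  rw [hfun]
  refine (hq2.add h4).congr_deriv ?_
  rw [ha x hx]
  field_simp
  ring
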